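/- arXiv:1808.06037 — 7 statements merged into one kernel-verified Lean document; each statement's English description precedes it below -/
import Mathlib

section
/- For all 1 ≤ i, j ≤ n, the entry a_{j, n-i+1} of the n×n sequential matrix is congruent to n · a_{i,j} modulo n²+1. In other words, rotating the sequential matrix 90° clockwise equals multiplying every entry by n modulo n²+1. -/
theorem sequential_matrix_rot90 (n i j : ℤ) (hn : 1 ≤ n)
    (hi1 : 1 ≤ i) (hin : i ≤ n) (hj1 : 1 ≤ j) (hjn : j ≤ n) :
    ((n - i + 1) + (j - 1) * n) ≡ n * (j + (i - 1) * n) [ZMOD (n ^ 2 + 1)] := by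
  exact Int.modEq_iff_dvd.mpr ⟨i - 1, by ring⟩
end

section
/- The entry a_{n-j+1, i} of the n×n sequential matrix is congruent to -n · a_{i,j} modulo n²+1 for all 1 ≤ i,j ≤ n. That is, rotating the sequential matrix 270° clockwise equals multiplying every entry by -n modulo n²+1. -/
theorem sequential_matrix_rot270 (n i j : ℤ) (hn : 1 ≤ n)
    (hi1 : 1 ≤ i) (hin : i ≤ n) (hj1 : 1 ≤ j) (hjn : j ≤ n) :
    (i + (n - j) * n) ≡ -n * (j + (i - 1) * n) [ZMOD (n ^ 2 + 1)] := by
  rw [Int.modEq_iff_dvd]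
  exact ⟨-i, by ring⟩
end

section
/- If φ : ℤ/(n²+1)ℤ → {0,1,-1} is a completely multiplicative function, then for all 1 ≤ i,j ≤ n we have φ(a_{j, n-i+1}) = φ(n) · φ(a_{i,j}), where a_{i,j} are entries of the n×n sequential matrix modulo n²+1. -/
theorem mult_fn_rot90 (n : ℕ) (hn : 0 < n)
    (φ : ZMod (n ^ 2 + 1) → ℤ)
    (hmul : ∀ a b, φ (a * b) = φ a * φ b)
    (hone : φ 1 = 1)
    (hrange : ∀ a, φ a = 0 ∨ φ a = 1 ∨ φ a = -1)
    (i j : ℤ) (hi1 : 1 ≤ i) (hin : i ≤ (n : ℤ)) (hj1 : 1 ≤ j) (hjn : j ≤ (n : ℤ)) :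
    φ ((((n : ℤ) - i + 1) + (j - 1) * n : ℤ) : ZMod (n ^ 2 + 1)) =
      φ (n : ZMod (n ^ 2 + 1)) * φ (((j + (i - 1) * n : ℤ)) : ZMod (n ^ 2 + 1)) := by
  have key : ((((n : ℤ) - i + 1) + (j - 1) * n : ℤ) : ZMod (n ^ 2 + 1)) =
      (((n : ℤ) * (j + (i - 1) * n) : ℤ) : ZMod (n ^ 2 + 1)) := by
    rw [ZMod.intCast_eq_intCast_iff]
    exact (Int.modEq_iff_dvd.mpr ⟨i - 1, by push_cast; ring⟩)
  rw [key]
  push_cast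
  rw [hmul]
end

section
/- If n is a positive even integer and m = n²+1, then the Jacobi symbol (n/m) equals (-1)^(n²/4). -/
theorem jacobi_n_of_nsq_add_one (n : ℕ) (hn : 0 < n) (hev : Even n) :
    jacobiSym (n : ℤ) (n ^ 2 + 1) = (-1) ^ (n ^ 2 / 4) := by
  obtain ⟨a, rfl⟩ := hev
  have ha : 0 < a := by omega
  set n := a + a with hn_def
  have hm4 : (n ^ 2 + 1) % 4 = 1 := by
    have : n ^ 2 = 4 * a ^ 2 := by simp [hn_def]; ring
    omega
  have hm2 : (n ^ 2 + 1) % 2 = 1 := by omega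
  have hmodd : Odd (n ^ 2 + 1) := Nat.odd_iff.mpr hm2
  obtain ⟨k, t, ht, hnkt⟩ := Nat.exists_eq_pow_mul_and_not_dvd hn.ne' 2 (by norm_num)
  have htodd : Odd t := Nat.odd_iff.mpr (by omega)
  have htm : jacobiSym (t : ℤ) (n ^ 2 + 1) = 1 := by
    rw [jacobiSym.quadratic_reciprocity_one_mod_four' htodd hm4]
    have hdvd : t ∣ n ^ 2 := ⟨2 ^ k * (2 ^ k * t), by rw [hnkt]; ring⟩
    obtain ⟨c, hc⟩ := hdvd
    have h1 : ((n ^ 2 + 1 : ℕ) : ℤ) % t = 1 % t := by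
      have : ((n ^ 2 + 1 : ℕ) : ℤ) = 1 + (t : ℤ) * c := by push_cast [hc]; ring
      rw [this, Int.add_mul_emod_self_left]
    rw [jacobiSym.mod_left' h1]
    exact jacobiSym.one_left t
  have hsplit : jacobiSym (n : ℤ) (n ^ 2 + 1)
      = jacobiSym 2 (n ^ 2 + 1) ^ k * jacobiSym (t : ℤ) (n ^ 2 + 1) := by
    rw [hnkt]; push_cast
    rw [jacobiSym.mul_left, jacobiSym.pow_left]
  rw [hsplit, htm, jacobiSym.at_two hmodd, mul_one]
  rcases Nat.even_or_odd a with hae | hao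
  · obtain ⟨b, rfl⟩ := hae
    have hsq : n ^ 2 = 8 * (2 * b ^ 2) := by simp [hn_def]; ring
    have h8 : (n ^ 2 + 1) % 8 = 1 := by omega
    have hχ : ZMod.χ₈ ((n ^ 2 + 1 : ℕ)) = 1 := by
      rw [ZMod.χ₈_nat_eq_if_mod_eight]
      simp [h8, hm2]
    rw [hχ, one_pow]
    have : n ^ 2 / 4 = 2 * (2 * b ^ 2) := by omega
    rw [this, pow_mul]; norm_num
  · have hk1 : k = 1 := by
      rcases Nat.lt_or_ge k 2 with hk | hk
      · interval_cases k
        · exfalso; simp at hnkt; omega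
        · rfl
      · exfalso
        have h4 : (4 : ℕ) ∣ 2 ^ k := by exact pow_dvd_pow 2 hk
        have : 4 ∣ n := hnkt ▸ dvd_mul_of_dvd_left h4 t
        rw [Nat.odd_iff] at hao
        omega
    obtain ⟨c, hc⟩ := hao
    have hsq : n ^ 2 = 8 * (2 * c ^ 2 + 2 * c) + 4 := by simp [hn_def, hc]; ring
    have h8 : (n ^ 2 + 1) % 8 = 5 := by omega
    have hχ : ZMod.χ₈ ((n ^ 2 + 1 : ℕ)) = -1 := by
      rw [ZMod.χ₈_nat_eq_if_mod_eight]
      simp [h8, hm2]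
    rw [hχ, hk1, pow_one]
    have : n ^ 2 / 4 = 2 * (2 * c ^ 2 + 2 * c) + 1 := by omega
    rw [this, pow_succ, pow_mul]; norm_num
end

section
/- If n is a positive integer with n ≡ 2 (mod 4) and m = n²+1, then the Jacobi symbol (n/m) equals -1. -/
theorem jacobi_n_eq_neg_one_of_mod_four (n : ℕ) (hn : 0 < n) (h : n % 4 = 2) :
    jacobiSym (n : ℤ) (n ^ 2 + 1) = -1 := by
  obtain ⟨u, hu⟩ : ∃ u, n = 2 * u := ⟨n / 2, by omega⟩
  have hodd : u % 2 = 1 := by omega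
  subst hu
  have hm : (2 * u) ^ 2 + 1 = 4 * u ^ 2 + 1 := by ring
  rw [hm]
  have hu2 : u ^ 2 % 2 = 1 := by
    rw [Nat.pow_mod, hodd]
  have hm8 : (4 * u ^ 2 + 1) % 8 = 5 := by omega
  have hm4 : (4 * u ^ 2 + 1) % 4 = 1 := by omega
  have hm2 : (4 * u ^ 2 + 1) % 2 = 1 := by omega
  have hmodd : Odd (4 * u ^ 2 + 1) := Nat.odd_iff.mpr hm2
  have h2 : jacobiSym 2 (4 * u ^ 2 + 1) = -1 := by
    rw [jacobiSym.at_two hmodd, ZMod.χ₈_nat_eq_if_mod_eight, hm8, hm2]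
    norm_num
  have huodd : Odd u := Nat.odd_iff.mpr hodd
  have hupos : 0 < u := by omega
  have hJu : jacobiSym (u : ℤ) (4 * u ^ 2 + 1) = 1 := by
    rw [jacobiSym.quadratic_reciprocity_one_mod_four' huodd hm4,
      jacobiSym.mod_left]
    have : ((4 * u ^ 2 + 1 : ℕ) : ℤ) % (u : ℤ) = 1 % (u : ℤ) := by
      push_cast
      have e : (4 * (u:ℤ) ^ 2 + 1) = 1 + 4 * u * u := by ring
      rw [e, Int.add_mul_emod_self_right]
    rw [this, ← jacobiSym.mod_left, jacobiSym.one_left]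
  have : ((2 * u : ℕ) : ℤ) = 2 * (u : ℤ) := by push_cast; ring
  rw [this, jacobiSym.mul_left, h2, hJu]
  norm_num
end

section
/- Let n be a positive even integer and m = n²+1. The permutation f of ℤ/mℤ given by f(a) = n·a has sign (-1)^(n²/4). -/
theorem sign_mul_by_n (n : ℕ) (hn : 0 < n) (hev : Even n)
    (f : Equiv.Perm (ZMod (n ^ 2 + 1))) (hf : ∀ a, f a = (n : ZMod (n ^ 2 + 1)) * a) :
    Equiv.Perm.sign f = (-1) ^ (n ^ 2 / 4) := by
  have hmodd : Odd (n ^ 2 + 1) := by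
    rcases hev with ⟨k, hk⟩
    exact ⟨2 * k ^ 2, by subst hk; ring⟩
  have hsq : (n : ZMod (n ^ 2 + 1)) ^ 2 = -1 := by
    have h0 : ((n ^ 2 + 1 : ℕ) : ZMod (n ^ 2 + 1)) = 0 := ZMod.natCast_self _
    push_cast at h0
    linear_combination h0
  have h2 : ∀ x : ZMod (n ^ 2 + 1), 2 * x = 0 → x = 0 := by
    intro x hx
    have hu : IsUnit (2 : ZMod (n ^ 2 + 1)) := by
      have := (ZMod.unitOfCoprime 2 (Nat.coprime_two_left.mpr hmodd)).isUnit
      rwa [ZMod.coe_unitOfCoprime, Nat.cast_ofNat] at this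
    exact (hu.mul_right_eq_zero).mp hx
  have hfix : ∀ x : ZMod (n ^ 2 + 1), f x = x → x = 0 := by
    intro x hx
    rw [hf] at hx
    have h1 : (n : ZMod (n ^ 2 + 1)) ^ 2 * x = x := by
      linear_combination (n : ZMod (n ^ 2 + 1)) * hx + hx
    rw [hsq] at h1
    apply h2
    linear_combination -h1
  have hsupp : f.support = {(0 : ZMod (n ^ 2 + 1))}ᶜ := by
    ext x
    simp only [Equiv.Perm.mem_support, Finset.mem_compl, Finset.mem_singleton]
    constructor
    · intro hx hx0
      exact hx (by rw [hx0, hf, mul_zero])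
    · intro hx0 hx
      exact hx0 (hfix x hx)
  have hcardsupp : f.support.card = n ^ 2 := by
    rw [hsupp, Finset.card_compl, Finset.card_singleton, ZMod.card]
    omega
  have h4 : f ^ 4 = 1 := by
    ext x
    simp only [Equiv.Perm.one_apply, show (4 : ℕ) = 3 + 1 from rfl, pow_succ, pow_zero,
      one_mul, Equiv.Perm.mul_apply, hf]
    linear_combination ((n : ZMod (n ^ 2 + 1)) ^ 2 - 1) * x * hsq
  have hcyc : ∀ a ∈ f.cycleType, a = 4 := by
    intro a ha
    have hd : a ∣ 4 := (Equiv.Perm.dvd_of_mem_cycleType ha).trans (orderOf_dvd_of_pow_eq_one h4)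
    have h2le := Equiv.Perm.two_le_of_mem_cycleType ha
    have hle : a ≤ 4 := Nat.le_of_dvd (by norm_num) hd
    interval_cases a
    · -- a = 2 : impossible
      exfalso
      obtain ⟨c, τ, hfct, hdisj, hc, hcard⟩ := Equiv.Perm.mem_cycleType_iff.1 ha
      have horder : orderOf c = 2 := by rw [hc.orderOf, hcard]
      have hc2 : c * c = 1 := by
        have h := pow_orderOf_eq_one c
        rw [horder] at h
        rw [← pow_two]
        exact h
      obtain ⟨x, hx⟩ : ∃ x, x ∈ c.support := by
        apply Finset.card_pos.mp
        rw [hcard]; norm_num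
      have hcx : c x ≠ x := Equiv.Perm.mem_support.mp hx
      have hτx : τ x = x := (hdisj x).resolve_left hcx
      have hτcx : τ (c x) = c x :=
        (hdisj (c x)).resolve_left (Equiv.Perm.mem_support.mp (Equiv.Perm.apply_mem_support.mpr hx))
      have hfx : f x = c x := by rw [hfct, Equiv.Perm.mul_apply, hτx]
      have hffx : f (f x) = x := by
        rw [hfx, hfct, Equiv.Perm.mul_apply, hτcx, ← Equiv.Perm.mul_apply, hc2,
          Equiv.Perm.one_apply]
      have hnx : (n : ZMod (n ^ 2 + 1)) * ((n : ZMod (n ^ 2 + 1)) * x) = x := by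
        rw [← hf, ← hf, hffx]
      have hx0 : x = 0 := by
        apply h2
        linear_combination x * hsq - hnx
      apply hcx
      rw [← hfx, hx0, hf, mul_zero]
    · -- a = 3 : doesn't divide 4
      exact absurd hd (by norm_num)
    · rfl
  have hrep : f.cycleType = Multiset.replicate (Multiset.card f.cycleType) 4 :=
    Multiset.eq_replicate_card.mpr hcyc
  have hsum : f.cycleType.sum = n ^ 2 := by rw [Equiv.Perm.sum_cycleType, hcardsupp]
  have hsum2 : Multiset.card f.cycleType • 4 = n ^ 2 := by
    rw [hrep, Multiset.sum_replicate] at hsum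
    exact hsum
  have hcard : Multiset.card f.cycleType = n ^ 2 / 4 := by
    simp only [smul_eq_mul] at hsum2
    omega
  rw [Equiv.Perm.sign_of_cycleType, hsum, hcard, pow_add]
  have hevsq : Even (n ^ 2) := by
    rcases hev with ⟨k, hk⟩
    exact ⟨2 * k ^ 2, by subst hk; ring⟩
  rw [hevsq.neg_one_pow, one_mul]
end

section
/- Let n ≥ 2 and m = n²+1. The map a ↦ n·a on the nonzero elements of ℤ/mℤ, restricted to nonzero residues, decomposes into exactly n²/4 disjoint 4-cycles when n is even. -/
theorem mul_by_n_cycleType (n : ℕ) (hn : 2 ≤ n) (hev : Even n)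
    (f : Equiv.Perm (ZMod (n ^ 2 + 1))) (hf : ∀ a, f a = (n : ZMod (n ^ 2 + 1)) * a) :
    f.cycleType = Multiset.replicate (n ^ 2 / 4) 4 := by
  have hsq : (n : ZMod (n ^ 2 + 1)) ^ 2 = -1 := by
    have h0 : ((n ^ 2 + 1 : ℕ) : ZMod (n ^ 2 + 1)) = 0 := ZMod.natCast_self _
    push_cast at h0
    linear_combination h0
  have h2 : IsUnit (2 : ZMod (n ^ 2 + 1)) := by
    have hc : Nat.Coprime 2 (n ^ 2 + 1) := by
      rw [Nat.coprime_two_left]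
      exact (by simpa [sq] using hev.mul_right n : Even (n ^ 2)).add_one
    have := (ZMod.isUnit_iff_coprime 2 (n ^ 2 + 1)).mpr hc
    simpa using this
  have hcancel : ∀ x : ZMod (n ^ 2 + 1), 2 * x = 0 → x = 0 := fun x hx =>
    (h2.mul_right_eq_zero).mp hx
  have hfix2 : ∀ x : ZMod (n ^ 2 + 1), f (f x) = x → x = 0 := by
    intro x hx
    rw [hf, hf] at hx
    exact hcancel x (by linear_combination x * hsq - hx)
  have hfix1 : ∀ x : ZMod (n ^ 2 + 1), f x = x → x = 0 := by
    intro x hx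
    exact hfix2 x (by rw [hx, hx])
  have hford : f ^ 4 = 1 := by
    ext x
    simp only [Equiv.Perm.coe_one, id_eq]
    show f (f (f (f x))) = x
    rw [hf, hf, hf, hf]
    linear_combination (x * (n : ZMod (n ^ 2 + 1)) ^ 2 - x) * hsq
  have hmem : ∀ b ∈ f.cycleType, b = 4 := by
    intro b hb
    have hdvd : b ∣ 4 := (Equiv.Perm.dvd_of_mem_cycleType hb).trans
      (orderOf_dvd_of_pow_eq_one hford)
    have h2le : 2 ≤ b := Equiv.Perm.two_le_of_mem_cycleType hb
    have hle4 : b ≤ 4 := Nat.le_of_dvd (by norm_num) hdvd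
    interval_cases b
    · -- b = 2 : impossible
      exfalso
      rw [Equiv.Perm.mem_cycleType_iff] at hb
      obtain ⟨c, τ, hfct, hd, hc, hcard⟩ := hb
      obtain ⟨x, hx⟩ := hc.nonempty_support
      have hτx : τ x = x := Equiv.Perm.notMem_support.mp
        (Finset.disjoint_left.mp (Equiv.Perm.disjoint_iff_disjoint_support.mp hd) hx)
      have hfx : f x = c x := by rw [hfct]; simp [hτx]
      have hcx : c x ∈ c.support := Equiv.Perm.apply_mem_support.mpr hx
      have hτcx : τ (c x) = c x := Equiv.Perm.notMem_support.mp
        (Finset.disjoint_left.mp (Equiv.Perm.disjoint_iff_disjoint_support.mp hd) hcx)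
      have hffx : f (f x) = c (c x) := by
        rw [hfx, hfct]; simp [hτcx]
      have hc2 : c ^ 2 = 1 := by
        have hoc : orderOf c = 2 := by rw [hc.orderOf, hcard]
        have hpow := pow_orderOf_eq_one c
        rwa [hoc] at hpow
      have hccx : c (c x) = x := by
        have : (c ^ 2) x = x := by rw [hc2]; rfl
        simpa [pow_succ, Equiv.Perm.mul_apply] using this
      have hx0 : x = 0 := hfix2 x (by rw [hffx, hccx])
      have : c x ≠ x := Equiv.Perm.mem_support.mp hx
      apply this
      rw [← hfx, hx0, hf]
      simp
    · -- b = 3 : doesn't divide 4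
      exact absurd hdvd (by norm_num)
    · rfl
  have hsupp : f.support = {(0 : ZMod (n ^ 2 + 1))}ᶜ := by
    ext x
    simp only [Equiv.Perm.mem_support, Finset.mem_compl, Finset.mem_singleton]
    constructor
    · intro h h0
      exact h (by rw [h0, hf]; simp)
    · intro h hfx
      exact h (hfix1 x hfx)
  have hcardR : Fintype.card (ZMod (n ^ 2 + 1)) = n ^ 2 + 1 := ZMod.card _
  have hsuppcard : f.support.card = n ^ 2 := by
    rw [hsupp, Finset.card_compl, Finset.card_singleton, hcardR]
    omega
  have hrep : f.cycleType = Multiset.replicate (Multiset.card f.cycleType) 4 :=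
    (Multiset.eq_replicate_card).mpr hmem
  have hsum : f.cycleType.sum = n ^ 2 := by
    rw [Equiv.Perm.sum_cycleType, hsuppcard]
  have hcard4 : Multiset.card f.cycleType * 4 = n ^ 2 := by
    rw [hrep] at hsum
    simpa [Multiset.sum_replicate, mul_comm] using hsum
  have : Multiset.card f.cycleType = n ^ 2 / 4 := by omega
  rw [hrep, this]
end
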